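/- In the Lyapunov setting (B = A*, D = C), suppose the block Arnoldi relation A U_m = U_m H_m + U_{m+1} H_{m+1,m} E_m* holds with U_m* U_m = I and C in the range of U_m, and Y Hermitian solves H_m Y + Y H_m* + (U_m* C)(U_m* C)* = 0. Then the residual R = A(U_m Y U_m*) + (U_m Y U_m*) A* + C C* can be written as R = F J F*, where F = [U_{m+1} H_{m+1,m} | U_m Y E_m] and J = [[0, I_s],[I_s, 0]]; in particular R is Hermitian of rank at most 2s. -/

import Mathlib

open Matrix
open scoped ComplexOrder

/-- The block matrix `E_m = e_m ⊗ I_s`. -/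
noncomputable def Em (m s : ℕ) : Matrix (Fin m × Fin s) (Fin s) ℂ :=
  fun p j => if p.1.val = m - 1 ∧ p.2 = j then 1 else 0

/-- In the Lyapunov setting, the Galerkin residual admits the symmetric indefinite
factorization `R = F J F*` with `F = [U_{m+1}H_{m+1,m} | U_m Y E_m]` and
`J = [[0, I],[I, 0]]`; in particular `R` is Hermitian of rank at most `2s`. -/
theorem lyapunov_residual_ldlt {n m s : ℕ} (hm : 0 < m)
    (A : Matrix (Fin n) (Fin n) ℂ) (C : Matrix (Fin n) (Fin s) ℂ)
    (Um : Matrix (Fin n) (Fin m × Fin s) ℂ) (U1 : Matrix (Fin n) (Fin s) ℂ)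
    (Hm Y : Matrix (Fin m × Fin s) (Fin m × Fin s) ℂ)
    (H1 : Matrix (Fin s) (Fin s) ℂ)
    (R : Matrix (Fin n) (Fin n) ℂ)
    (hUm : Umᴴ * Um = 1)
    (hArn : A * Um = Um * Hm + U1 * H1 * (Em m s)ᴴ)
    (hHm : Hm = Umᴴ * A * Um)
    (hC : C = Um * (Umᴴ * C))
    (hYh : Y.IsHermitian)
    (hY : Hm * Y + Y * Hmᴴ + (Umᴴ * C) * (Umᴴ * C)ᴴ = 0)
    (hR : R = A * (Um * Y * Umᴴ) + (Um * Y * Umᴴ) * Aᴴ + C * Cᴴ) :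
    R = (Matrix.fromCols (U1 * H1) (Um * Y * Em m s))
          * (Matrix.fromBlocks 0 1 1 0 : Matrix (Fin s ⊕ Fin s) (Fin s ⊕ Fin s) ℂ)
          * (Matrix.fromCols (U1 * H1) (Um * Y * Em m s))ᴴ
      ∧ R.IsHermitian ∧ R.rank ≤ 2 * s := by
  set E := Em m s
  have hkey : R = U1 * H1 * Eᴴ * Y * Umᴴ + Um * Y * (E * (H1ᴴ * U1ᴴ)) := by
    have h1 : A * (Um * Y * Umᴴ) = Um * (Hm * Y) * Umᴴ + U1 * H1 * Eᴴ * Y * Umᴴ := by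
      calc A * (Um * Y * Umᴴ) = (A * Um) * Y * Umᴴ := by
            simp only [Matrix.mul_assoc]
        _ = Um * (Hm * Y) * Umᴴ + U1 * H1 * Eᴴ * Y * Umᴴ := by
            rw [hArn]; simp only [Matrix.add_mul, Matrix.mul_assoc]
    have h2 : (Um * Y * Umᴴ) * Aᴴ = Um * (Y * Hmᴴ) * Umᴴ + Um * Y * (E * (H1ᴴ * U1ᴴ)) := by
      have hAt : (A * Um)ᴴ = Hmᴴ * Umᴴ + E * (H1ᴴ * U1ᴴ) := by
        rw [hArn]; simp [conjTranspose_mul, Matrix.mul_assoc]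
      calc (Um * Y * Umᴴ) * Aᴴ = Um * Y * (A * Um)ᴴ := by
            simp only [conjTranspose_mul, Matrix.mul_assoc]
        _ = Um * (Y * Hmᴴ) * Umᴴ + Um * Y * (E * (H1ᴴ * U1ᴴ)) := by
            rw [hAt]; simp only [Matrix.mul_add, Matrix.mul_assoc]
    have h3 : C * Cᴴ = Um * ((Umᴴ * C) * (Umᴴ * C)ᴴ) * Umᴴ := by
      conv_lhs => rw [hC]
      simp only [conjTranspose_mul, Matrix.mul_assoc]
    rw [hR, h1, h2, h3]
    have : Um * (Hm * Y) * Umᴴ + Um * (Y * Hmᴴ) * Umᴴ + Um * ((Umᴴ * C) * (Umᴴ * C)ᴴ) * Umᴴ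
        = Um * (Hm * Y + Y * Hmᴴ + (Umᴴ * C) * (Umᴴ * C)ᴴ) * Umᴴ := by
      simp only [Matrix.mul_add, Matrix.add_mul]
    have hz : Um * (Hm * Y) * Umᴴ + Um * (Y * Hmᴴ) * Umᴴ + Um * ((Umᴴ * C) * (Umᴴ * C)ᴴ) * Umᴴ = 0 := by
      rw [this, hY]; simp
    have := hz
    abel_nf
    abel_nf at hz
    linear_combination (norm := abel) hz
  have hF : R = (Matrix.fromCols (U1 * H1) (Um * Y * E))
          * (Matrix.fromBlocks 0 1 1 0 : Matrix (Fin s ⊕ Fin s) (Fin s ⊕ Fin s) ℂ)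
          * (Matrix.fromCols (U1 * H1) (Um * Y * E))ᴴ := by
    rw [conjTranspose_fromCols_eq_fromRows_conjTranspose]
    have hswap : (Matrix.fromCols (U1 * H1) (Um * Y * E))
        * (Matrix.fromBlocks 0 1 1 0 : Matrix (Fin s ⊕ Fin s) (Fin s ⊕ Fin s) ℂ)
        = Matrix.fromCols (Um * Y * E) (U1 * H1) := by
      rw [Matrix.fromCols_mul_fromBlocks]
      simp
    rw [hswap, Matrix.fromCols_mul_fromRows]
    rw [hkey]
    have hYY : Yᴴ = Y := hYh
    simp only [conjTranspose_mul, Matrix.mul_assoc, hYY]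
    abel
  refine ⟨hF, ?_, ?_⟩
  · rw [hF]
    unfold Matrix.IsHermitian
    simp only [conjTranspose_mul, conjTranspose_conjTranspose]
    have : (Matrix.fromBlocks 0 1 1 0 : Matrix (Fin s ⊕ Fin s) (Fin s ⊕ Fin s) ℂ)ᴴ
        = Matrix.fromBlocks 0 1 1 0 := by
      simp [Matrix.fromBlocks_conjTranspose]
    rw [this, Matrix.mul_assoc, Matrix.mul_assoc]
  · rw [hF]
    calc ((Matrix.fromCols (U1 * H1) (Um * Y * E))
          * (Matrix.fromBlocks 0 1 1 0 : Matrix (Fin s ⊕ Fin s) (Fin s ⊕ Fin s) ℂ)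
          * (Matrix.fromCols (U1 * H1) (Um * Y * E))ᴴ).rank
        ≤ ((Matrix.fromCols (U1 * H1) (Um * Y * E))
          * (Matrix.fromBlocks 0 1 1 0 : Matrix (Fin s ⊕ Fin s) (Fin s ⊕ Fin s) ℂ)).rank :=
          Matrix.rank_mul_le_left _ _
      _ ≤ (Matrix.fromCols (U1 * H1) (Um * Y * E)).rank := Matrix.rank_mul_le_left _ _
      _ ≤ Fintype.card (Fin s ⊕ Fin s) := Matrix.rank_le_card_width _
      _ = 2 * s := by simp [two_mul]
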